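/- Let $(d_r)_{r\ge1}$ be integers $\ge 2$, $(p_r)_{r\ge1}$ probabilities in $(0,1]$, and let $f_r(z) = ((z-(1-p_r))/p_r)^{d_r}$, $\tilde f_r = f_r\circ\cdots\circ f_1$. Then the fibered filled Julia set $\mathcal{E} = \{\lambda \in \mathbb{C} : \limsup_{r\to\infty} |\tilde f_r(\lambda)| < \infty\}$ equals $\{\lambda \in \mathbb{C} : |\tilde f_r(\lambda)| \le 1 \text{ for all } r \ge 1\}$. -/

import Mathlib

/-- The polynomial `f_r(z) = ((z - (1 - p_r))/p_r)^(d_r)`. -/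
noncomputable def fr (d : ℕ → ℕ) (p : ℕ → ℝ) (r : ℕ) (z : ℂ) : ℂ :=
  ((z - (1 - (p r : ℂ))) / (p r : ℂ)) ^ (d r)

/-- The composition `f̃_r = f_r ∘ ⋯ ∘ f_1`, with `f̃_0 = id`. -/
noncomputable def ftil (d : ℕ → ℕ) (p : ℕ → ℝ) : ℕ → ℂ → ℂ
  | 0 => fun z => z
  | r + 1 => fun z => fr d p (r + 1) (ftil d p r z)

lemma abs_fr_ge (d : ℕ → ℕ) (p : ℕ → ℝ) (r : ℕ) (hp0 : 0 < p r) (hp1 : p r ≤ 1)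
    (z : ℂ) (hz : 1 ≤ ‖z‖) :
    ‖z‖ ^ (d r) ≤ ‖fr d p r z‖ := by
  unfold fr
  rw [norm_pow]
  apply pow_le_pow_left₀ (norm_nonneg z)
  rw [norm_div]
  have h1 : (1 - (p r : ℂ)) = ((1 - p r : ℝ) : ℂ) := by push_cast; ring
  have h2 : ‖(p r : ℂ)‖ = p r := by
    rw [Complex.norm_real, Real.norm_eq_abs, abs_of_pos hp0]
  have h3 : ‖z‖ - (1 - p r) ≤ ‖z - (1 - (p r : ℂ))‖ := by
    have := norm_sub_le z (1 - (p r : ℂ))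
    have h4 : ‖1 - (p r : ℂ)‖ = 1 - p r := by
      rw [h1, Complex.norm_real, Real.norm_eq_abs, abs_of_nonneg (by linarith)]
    calc ‖z‖ - (1 - p r)
        = ‖(z - (1 - (p r : ℂ))) + (1 - (p r : ℂ))‖ - (1 - p r) := by ring_nf
      _ ≤ (‖z - (1 - (p r : ℂ))‖ + ‖1 - (p r : ℂ)‖) - (1 - p r) := by
          gcongr; exact norm_add_le _ _
      _ = ‖z - (1 - (p r : ℂ))‖ := by rw [h4]; ring
  rw [h2, le_div_iff₀ hp0]
  nlinarith [hz]

theorem stmt3 (d : ℕ → ℕ) (p : ℕ → ℝ)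
    (hd : ∀ r, 1 ≤ r → 2 ≤ d r) (hp : ∀ r, 1 ≤ r → 0 < p r ∧ p r ≤ 1) :
    {lam : ℂ | Filter.IsBoundedUnder (· ≤ ·) Filter.atTop
        (fun r : ℕ => ‖ftil d p r lam‖)} =
      {lam : ℂ | ∀ r, 1 ≤ r → ‖ftil d p r lam‖ ≤ 1} := by
  ext lam
  simp only [Set.mem_setOf_eq]
  constructor
  · intro hb
    by_contra hcon
    push_neg at hcon
    obtain ⟨r, hr1, hr⟩ := hcon
    set a := ‖ftil d p r lam‖ with ha
    -- key growth: ∀ k, a^(2^k) ≤ abs (ftil (r+k))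
    have key : ∀ k, a ^ (2 ^ k) ≤ ‖ftil d p (r + k) lam‖ := by
      intro k
      induction k with
      | zero => simp [ha]
      | succ k ih =>
        have hge1 : 1 ≤ ‖ftil d p (r + k) lam‖ := by
          refine le_trans ?_ ih
          exact one_le_pow₀ (le_of_lt hr)
        have step : ‖ftil d p (r + k) lam‖ ^ (d (r + k + 1)) ≤
            ‖ftil d p (r + k + 1) lam‖ := by
          have hpk := hp (r + k + 1) (by omega)
          exact abs_fr_ge d p (r + k + 1) hpk.1 hpk.2 _ hge1
        calc a ^ (2 ^ (k + 1)) = (a ^ (2 ^ k)) ^ 2 := by rw [← pow_mul]; ring_nf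
          _ ≤ ‖ftil d p (r + k) lam‖ ^ 2 := by
              gcongr
          _ ≤ ‖ftil d p (r + k) lam‖ ^ (d (r + k + 1)) := by
              apply pow_le_pow_right₀ hge1 (hd (r + k + 1) (by omega))
          _ ≤ ‖ftil d p (r + k + 1) lam‖ := step
    obtain ⟨b, hbound⟩ := hb
    rw [Filter.eventually_map] at hbound
    have htend : Filter.Tendsto (fun k : ℕ => a ^ (2 ^ k)) Filter.atTop Filter.atTop := by
      exact (tendsto_pow_atTop_atTop_of_one_lt hr).comp
        (tendsto_pow_atTop_atTop_of_one_lt one_lt_two)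
    obtain ⟨N, hN⟩ := Filter.eventually_atTop.mp hbound
    obtain ⟨K, hK⟩ := Filter.eventually_atTop.mp (htend.eventually_gt_atTop b)
    have h1 := hN (r + max K N) (by omega)
    have h2 := hK (max K N) (le_max_left _ _)
    have h3 := key (max K N)
    linarith
  · intro h
    refine ⟨max (‖lam‖) 1, ?_⟩
    rw [Filter.eventually_map]
    refine Filter.Eventually.of_forall fun n => ?_
    rcases Nat.eq_zero_or_pos n with h0 | h1
    · subst h0; simp [ftil]
    · exact le_trans (h n h1) (le_max_right _ _)
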